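/- For every d ∈ N, the cross-polytope C_d = {x ∈ R^d : |2x_1 − 1| + ... + |2x_d − 1| ≤ d} is maximal lattice-free, i.e., C_d is d-dimensional, its interior contains no point of Z^d, and it is not properly contained in any other closed convex set with this property. -/

import Mathlib

open Pointwise

noncomputable section

/-- Standard inner product on `Fin d → ℝ`. -/
def dot {d : ℕ} (a x : Fin d → ℝ) : ℝ := ∑ i, a i * x i

/-- A polyhedron: intersection of finitely many closed halfspaces. -/
def IsPolyhedron {d : ℕ} (P : Set (Fin d → ℝ)) : Prop :=
  ∃ (n : ℕ) (a : Fin n → Fin d → ℝ) (b : Fin n → ℝ),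
    P = {x | ∀ i, dot (a i) x ≤ b i}

/-- A rational polyhedron: intersection of finitely many rational closed halfspaces. -/
def IsRationalPolyhedron {d : ℕ} (P : Set (Fin d → ℝ)) : Prop :=
  ∃ (n : ℕ) (a : Fin n → Fin d → ℚ) (b : Fin n → ℚ),
    P = {x | ∀ i, dot (fun j => ((a i j : ℝ))) x ≤ (b i : ℝ)}

/-- Recession cone of a set: `{u : P + u ⊆ P}`. -/
def recCone {d : ℕ} (P : Set (Fin d → ℝ)) : Set (Fin d → ℝ) :=
  {u | ∀ x ∈ P, x + u ∈ P}

/-- A set of vectors is a linear subspace. -/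
def IsLinearSubspaceSet {d : ℕ} (S : Set (Fin d → ℝ)) : Prop :=
  ∃ W : Submodule ℝ (Fin d → ℝ), S = (W : Set (Fin d → ℝ))

/-- A set is line-free if it contains no affine line. -/
def LineFree {d : ℕ} (P : Set (Fin d → ℝ)) : Prop :=
  ¬ ∃ (x v : Fin d → ℝ), v ≠ 0 ∧ ∀ t : ℝ, x + t • v ∈ P

/-- `F` is a face of the convex set `P`. -/
def IsFaceOf {d : ℕ} (P F : Set (Fin d → ℝ)) : Prop :=
  F ⊆ P ∧ Convex ℝ F ∧ ∀ x ∈ P, ∀ y ∈ P, ∀ t : ℝ, 0 < t → t < 1 →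
    t • x + (1 - t) • y ∈ F → x ∈ F ∧ y ∈ F

/-- Affine dimension of a set. -/
def adim {d : ℕ} (S : Set (Fin d → ℝ)) : ℕ :=
  Module.finrank ℝ (affineSpan ℝ S).direction

/-- Vertices: 0-dimensional faces, i.e. singleton faces. -/
def IsVertex {d : ℕ} (P : Set (Fin d → ℝ)) (x : Fin d → ℝ) : Prop :=
  IsFaceOf P {x}

/-- Union of all edges (1-dimensional faces) of `P`. -/
def edgeUnion {d : ℕ} (P : Set (Fin d → ℝ)) : Set (Fin d → ℝ) :=
  ⋃₀ {e | IsFaceOf P e ∧ adim e = 1}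

/-- A representation of `L` with width `m`:
`L = {x : bᵢ - m ≤ ⟨aᵢ, x⟩ ≤ bᵢ, i ∈ [n]}` with `aᵢ ∈ ℤ^d \ {0}`, `bᵢ ∈ ℤ`. -/
def HasWidthRep {d : ℕ} (L : Set (Fin d → ℝ)) (m : ℕ) : Prop :=
  ∃ (n : ℕ) (a : Fin n → Fin d → ℤ) (b : Fin n → ℤ),
    (∀ i, a i ≠ 0) ∧
    L = {x | ∀ i, (b i : ℝ) - (m : ℝ) ≤ dot (fun j => ((a i j : ℝ))) x ∧
        dot (fun j => ((a i j : ℝ))) x ≤ (b i : ℝ)}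

/-- Max-facet-width, `+∞` if no representation exists. -/
def mfw {d : ℕ} (L : Set (Fin d → ℝ)) : ℕ∞ :=
  sInf {m : ℕ∞ | ∃ k : ℕ, m = (k : ℕ∞) ∧ HasWidthRep L k}

/-- The set of integral points of `ℝ^d`. -/
def intPoints (d : ℕ) : Set (Fin d → ℝ) :=
  {x | ∃ z : Fin d → ℤ, x = fun i => (z i : ℝ)}

/-- A lattice-free set: `d`-dimensional closed convex set whose interior
contains no integral point. -/
def LatticeFree {d : ℕ} (L : Set (Fin d → ℝ)) : Prop :=
  IsClosed L ∧ Convex ℝ L ∧ adim L = d ∧ interior L ∩ intPoints d = ∅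

/-- A maximal lattice-free set. -/
def MaxLatticeFree {d : ℕ} (L : Set (Fin d → ℝ)) : Prop :=
  LatticeFree L ∧ ∀ L' : Set (Fin d → ℝ), LatticeFree L' → L ⊆ L' → L = L'

/-- `ℤ^d`-equivalence: `Y = U(X) + b` for a unimodular `U` and integral `b`. -/
def ZdEquiv {d : ℕ} (X Y : Set (Fin d → ℝ)) : Prop :=
  ∃ (U : Matrix (Fin d) (Fin d) ℤ) (b : Fin d → ℤ),
    (U.det = 1 ∨ U.det = -1) ∧
    Y = (fun x => (U.map (Int.cast : ℤ → ℝ)).mulVec x + fun i => (b i : ℝ)) '' X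

/-- Sign vectors with an even number of `-1` entries. -/
def Aplus (d : ℕ) : Set (Fin d → ℝ) :=
  {a | (∀ i, a i = 1 ∨ a i = -1) ∧ Even {i | a i = -1}.ncard}

/-- Sign vectors with an odd number of `-1` entries. -/
def Aminus (d : ℕ) : Set (Fin d → ℝ) :=
  {a | (∀ i, a i = 1 ∨ a i = -1) ∧ Odd {i | a i = -1}.ncard}


-- Auxiliary lemmas for stmt11
section Stmt11Aux

variable {d : ℕ}

private lemma stmt11_cont : Continuous (fun x : Fin d → ℝ => ∑ i, |2 * x i - 1|) := by
  apply continuous_finset_sum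
  intro i _
  exact ((continuous_const.mul (continuous_apply i)).sub continuous_const).abs

private lemma stmt11_int_ge (hd : 0 < d) (z : Fin d → ℤ) :
    (d : ℝ) ≤ ∑ i, |2 * ((z i : ℝ)) - 1| := by
  have h1 : ∀ i : Fin d, (1 : ℝ) ≤ |2 * ((z i : ℝ)) - 1| := by
    intro i
    have h : (2 * ((z i : ℝ)) - 1) = ((2 * z i - 1 : ℤ) : ℝ) := by push_cast; ring
    rw [h, ← Int.cast_abs]
    have : (1 : ℤ) ≤ |2 * z i - 1| := Int.one_le_abs (by omega)
    exact_mod_cast this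
  calc (d : ℝ) = ∑ _i : Fin d, (1 : ℝ) := by simp
    _ ≤ _ := Finset.sum_le_sum (fun i _ => h1 i)

end Stmt11Aux

theorem stmt11 {d : ℕ} (hd : 0 < d)
    (C : Set (Fin d → ℝ))
    (hC : C = {x | ∑ i, |2 * x i - 1| ≤ (d : ℝ)}) :
    MaxLatticeFree C := by
  set f : (Fin d → ℝ) → ℝ := fun x => ∑ i, |2 * x i - 1| with hfdef
  have hmemC : ∀ x, x ∈ C ↔ f x ≤ d := by intro x; rw [hC]; rfl
  -- convexity
  have hconv : Convex ℝ C := by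
    intro x hx y hy a b ha hb hab
    rw [hmemC] at hx hy ⊢
    calc f (a • x + b • y)
        ≤ ∑ i, (a * |2 * x i - 1| + b * |2 * y i - 1|) := by
          apply Finset.sum_le_sum
          intro i _
          have h1 : 2 * (a • x + b • y) i - 1 = a * (2 * x i - 1) + b * (2 * y i - 1) := by
            simp only [Pi.add_apply, Pi.smul_apply, smul_eq_mul]
            linear_combination hab
          rw [h1]
          calc |a * (2 * x i - 1) + b * (2 * y i - 1)|
              ≤ |a * (2 * x i - 1)| + |b * (2 * y i - 1)| := abs_add_le _ _
            _ = a * |2 * x i - 1| + b * |2 * y i - 1| := by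
                rw [abs_mul, abs_mul, abs_of_nonneg ha, abs_of_nonneg hb]
      _ = a * f x + b * f y := by rw [Finset.sum_add_distrib, ← Finset.mul_sum, ← Finset.mul_sum]
      _ ≤ a * d + b * d := by
          have h1 := mul_le_mul_of_nonneg_left hx ha
          have h2 := mul_le_mul_of_nonneg_left hy hb
          linarith
      _ = d := by linear_combination (d : ℝ) * hab
  -- closedness
  have hclosed : IsClosed C := by
    rw [hC]; exact isClosed_le stmt11_cont continuous_const
  -- strict sublevel set is in interior
  have hopen : IsOpen {x : Fin d → ℝ | f x < d} := isOpen_lt stmt11_cont continuous_const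
  have hSsub : {x : Fin d → ℝ | f x < d} ⊆ interior C :=
    interior_maximal (fun x hx => (hmemC x).mpr (le_of_lt hx)) hopen
  -- interior points have f < d
  have hstrict : ∀ z ∈ interior C, f z < d := by
    intro z hz
    by_contra hge
    push_neg at hge
    have hmem : C ∈ nhds z := mem_interior_iff_mem_nhds.mp hz
    set g : ℝ → (Fin d → ℝ) := fun t => z + t • (z - fun _ => (1 : ℝ) / 2) with hg
    have hg0 : g 0 = z := by simp [hg]
    have hgc : ContinuousAt g 0 := by fun_prop
    have hev : ∀ᶠ t in nhds (0 : ℝ), g t ∈ C := hgc (by rw [hg0]; exact hmem)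
    have hev' : ∀ᶠ t in nhdsWithin (0 : ℝ) (Set.Ioi 0), g t ∈ C :=
      hev.filter_mono nhdsWithin_le_nhds
    obtain ⟨t, htC, htpos⟩ := (hev'.and self_mem_nhdsWithin).exists
    rw [hmemC] at htC
    have hcalc : f (g t) = (1 + t) * f z := by
      rw [hfdef]
      simp only
      rw [Finset.mul_sum]
      apply Finset.sum_congr rfl
      intro i _
      have h1 : 2 * (g t) i - 1 = (1 + t) * (2 * z i - 1) := by
        simp only [hg, Pi.add_apply, Pi.smul_apply, Pi.sub_apply, smul_eq_mul]
        ring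
      rw [h1, abs_mul, abs_of_pos (by linarith : (0 : ℝ) < 1 + t)]
    rw [hcalc] at htC
    have hdpos : (0 : ℝ) < d := by exact_mod_cast hd
    nlinarith [htpos]
  -- adim
  have hcenter : (fun _ => (1 : ℝ) / 2) ∈ interior C := by
    apply hSsub
    have : f (fun _ => (1 : ℝ) / 2) = 0 := by
      rw [hfdef]; simp
    rw [Set.mem_setOf_eq, this]
    exact_mod_cast hd
  have hspan : affineSpan ℝ C = ⊤ :=
    hconv.interior_nonempty_iff_affineSpan_eq_top.mp ⟨_, hcenter⟩
  have hadim : adim C = d := by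
    unfold adim
    rw [hspan, AffineSubspace.direction_top, finrank_top, Module.finrank_fin_fun]
  -- interior free of integral points
  have hfree : interior C ∩ intPoints d = ∅ := by
    rw [Set.eq_empty_iff_forall_notMem]
    rintro x ⟨hxi, z, rfl⟩
    exact absurd (hstrict _ hxi) (not_lt.mpr (stmt11_int_ge hd z))
  refine ⟨⟨hclosed, hconv, hadim, hfree⟩, ?_⟩
  -- maximality
  intro L' hL' hsub
  by_contra hne
  obtain ⟨y, hyL, hyC⟩ := Set.exists_of_ssubset (HasSubset.Subset.ssubset_of_ne hsub hne)
  have hyF : (d : ℝ) < f y := by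
    by_contra h
    exact hyC ((hmemC y).mpr (not_lt.mp h))
  set F : ℝ := f y with hF
  have hFnn : ∀ i : Fin d, 0 ≤ |2 * y i - 1| := fun i => abs_nonneg _
  have hdpos : (0 : ℝ) < d := by exact_mod_cast hd
  have hFpos : 0 < F := lt_trans hdpos hyF
  have hFi : ∀ i : Fin d, |2 * y i - 1| ≤ F := by
    intro i
    exact Finset.single_le_sum (fun j _ => hFnn j) (Finset.mem_univ i)
  set lam : ℝ := 1 / (1 + F) with hlam
  have h1F : (0 : ℝ) < 1 + F := by linarith
  have hlampos : 0 < lam := by positivity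
  have hlamlt : lam < 1 := by
    rw [hlam, div_lt_one h1F]; linarith
  have h1lam : 0 < 1 - lam := by linarith
  set a : Fin d → ℝ := fun i => if 0 ≤ 2 * y i - 1 then 1 else -1 with ha
  set z : Fin d → ℝ := fun i => if 0 ≤ 2 * y i - 1 then 1 else 0 with hz
  have haz : ∀ i, 2 * z i - 1 = a i := by
    intro i; simp only [hz, ha]; split_ifs <;> norm_num
  have habs : ∀ i, a i * (2 * y i - 1) = |2 * y i - 1| := by
    intro i; simp only [ha]; split_ifs with h
    · rw [one_mul, abs_of_nonneg h]
    · rw [abs_of_neg (not_le.mp h)]; ring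
  have ha1 : ∀ i, a i * a i = 1 := by
    intro i; simp only [ha]; split_ifs <;> norm_num
  have hzint : z ∈ intPoints d := by
    refine ⟨fun i => if 0 ≤ 2 * y i - 1 then 1 else 0, ?_⟩
    funext i; simp only [hz]; split_ifs <;> norm_num
  set x : Fin d → ℝ := (1 - lam)⁻¹ • (z - lam • y) with hx
  have hcombo : (1 - lam) • x + lam • y = z := by
    rw [hx, smul_inv_smul₀ (ne_of_gt h1lam)]
    abel
  -- f x < d
  have hterm : ∀ i, |2 * x i - 1| = (1 - lam * |2 * y i - 1|) / (1 - lam) := by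
    intro i
    have hxi : x i = (1 - lam)⁻¹ * (z i - lam * y i) := by
      simp [hx, Pi.smul_apply, Pi.sub_apply, smul_eq_mul]
    have h2 : 2 * x i - 1 = (a i - lam * (2 * y i - 1)) / (1 - lam) := by
      rw [hxi, ← haz i]
      field_simp
      ring
    have hkey : a i - lam * (2 * y i - 1) = a i * (1 - lam * |2 * y i - 1|) := by
      rw [← habs i]
      linear_combination (lam * (2 * y i - 1)) * (ha1 i)
    have hnn : 0 ≤ 1 - lam * |2 * y i - 1| := by
      have h3 : lam * |2 * y i - 1| ≤ lam * F := by
        apply mul_le_mul_of_nonneg_left (hFi i) (le_of_lt hlampos)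
      have h4 : lam * F < 1 := by
        rw [hlam, div_mul_eq_mul_div, div_lt_one h1F]; linarith
      linarith
    have haa : |a i| = 1 := by
      simp only [ha]; split_ifs <;> norm_num
    rw [h2, hkey, abs_div, abs_mul, haa, one_mul, abs_of_nonneg hnn,
      abs_of_pos h1lam]
  have hfx : f x < d := by
    have hsum : f x = (d - lam * F) / (1 - lam) := by
      rw [hfdef]
      simp only
      rw [Finset.sum_congr rfl (fun i _ => hterm i), ← Finset.sum_div]
      congr 1
      rw [Finset.sum_sub_distrib, Finset.sum_const, Finset.card_fin, ← Finset.mul_sum]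
      simp [hF, hfdef]
    rw [hsum, div_lt_iff₀ h1lam]
    nlinarith
  have hxint : x ∈ interior L' := interior_mono hsub (hSsub hfx)
  have hzmem : z ∈ interior L' := by
    rw [← hcombo]
    exact hL'.2.1.combo_interior_self_mem_interior hxint hyL h1lam (le_of_lt hlampos)
      (by ring)
  exact Set.eq_empty_iff_forall_notMem.mp hL'.2.2.2 z ⟨hzmem, hzint⟩
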